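/- Let ℓ : ℕ → ℝ be a sequence of positive real numbers whose counting function N(T) := #{j : ℓ j ≤ T} is finite for every real T, and let h and a be real numbers with 0 < a < h. Suppose lim_{T→∞} T·N(T)·exp(−h·T) = 1. Then liminf_{T→∞} exp(−(h−a)·T) · Σ_{j : T−1 < ℓ j ≤ T} ℓ j · exp(−a·ℓ j) > 0; in particular the weighted length sums over the windows (T−1, T] grow exponentially in T. -/

import Mathlib

open Filter

theorem window_sum_exponential_growth (ℓ : ℕ → ℝ) (hpos : ∀ j, 0 < ℓ j)
    (hfin : ∀ T : ℝ, {j : ℕ | ℓ j ≤ T}.Finite)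
    (h a : ℝ) (ha : 0 < a) (hah : a < h)
    (hPOT : Tendsto (fun T : ℝ => T * (Nat.card {j : ℕ | ℓ j ≤ T} : ℝ) * Real.exp (-h * T))
      atTop (nhds 1)) :
    0 < liminf (fun T : ℝ =>
      ((Real.exp (-((h - a) * T)) *
        ∑' j : {j : ℕ // T - 1 < ℓ j ∧ ℓ j ≤ T}, ℓ (j : ℕ) * Real.exp (-(a * ℓ (j : ℕ))) : ℝ)
        : EReal)) atTop := by
  classical
  set N : ℝ → ℝ := fun T => (Nat.card {j : ℕ | ℓ j ≤ T} : ℝ) with hN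
  set f : ℝ → ℝ := fun T => (T - 1) * Real.exp (-h * T) * (N T - N (T - 1)) with hf
  set c : ℝ := 1 - Real.exp (-h) with hc
  have hc0 : 0 < c := by
    have h1 : Real.exp (-h) < Real.exp 0 := Real.exp_lt_exp.2 (by linarith)
    rw [Real.exp_zero] at h1
    rw [hc]; linarith
  -- limit of f
  have h2 : Tendsto (fun T : ℝ => (T - 1) * N (T - 1) * Real.exp (-h * (T - 1))) atTop
      (nhds 1) := by
    have := hPOT.comp (tendsto_atTop_add_const_right atTop (-1) tendsto_id)
    simpa [Function.comp_def, sub_eq_add_neg, hN] using this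
  have hratio : Tendsto (fun T : ℝ => (T - 1) / T) atTop (nhds 1) := by
    have h0 : Tendsto (fun T : ℝ => 1 - T⁻¹) atTop (nhds (1 - 0)) :=
      tendsto_const_nhds.sub tendsto_inv_atTop_zero
    rw [sub_zero] at h0
    refine h0.congr' ?_
    filter_upwards [eventually_gt_atTop (0 : ℝ)] with T hT
    field_simp
  have hflim : Tendsto f atTop (nhds c) := by
    have hmain : Tendsto (fun T : ℝ =>
        (T - 1) / T * (T * N T * Real.exp (-h * T))
          - Real.exp (-h) * ((T - 1) * N (T - 1) * Real.exp (-h * (T - 1)))) atTop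
        (nhds (1 * 1 - Real.exp (-h) * 1)) :=
      (hratio.mul hPOT).sub (tendsto_const_nhds.mul h2)
    have hone : (1 : ℝ) * 1 - Real.exp (-h) * 1 = c := by rw [hc]; ring
    rw [hone] at hmain
    refine hmain.congr' ?_
    filter_upwards [eventually_gt_atTop (0 : ℝ)] with T hT
    have hT0 : T ≠ 0 := ne_of_gt hT
    have hexp : Real.exp (-h) * Real.exp (-h * (T - 1)) = Real.exp (-h * T) := by
      rw [← Real.exp_add]; congr 1; ring
    have e1 : (T - 1) / T * (T * N T * Real.exp (-h * T))
        = (T - 1) * Real.exp (-h * T) * N T := by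
      field_simp
    have e2 : Real.exp (-h) * ((T - 1) * N (T - 1) * Real.exp (-h * (T - 1)))
        = (T - 1) * Real.exp (-h * T) * N (T - 1) := by
      rw [← hexp]; ring
    show _ = (T - 1) * Real.exp (-h * T) * (N T - N (T - 1))
    rw [e1, e2]; ring
  -- lower bound of the window sum by f, for T ≥ 1
  have key : ∀ T : ℝ, 1 ≤ T →
      f T ≤ Real.exp (-((h - a) * T)) *
        ∑' j : {j : ℕ // T - 1 < ℓ j ∧ ℓ j ≤ T}, ℓ (j : ℕ) * Real.exp (-(a * ℓ (j : ℕ))) := by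
    intro T hT
    have hsub : {j : ℕ | T - 1 < ℓ j ∧ ℓ j ≤ T} ⊆ {j : ℕ | ℓ j ≤ T} := fun j hj => hj.2
    have hFin : {j : ℕ | T - 1 < ℓ j ∧ ℓ j ≤ T}.Finite := (hfin T).subset hsub
    haveI inst : Fintype {j : ℕ // T - 1 < ℓ j ∧ ℓ j ≤ T} := hFin.fintype
    have hsum : (∑' j : {j : ℕ // T - 1 < ℓ j ∧ ℓ j ≤ T}, ℓ (j : ℕ) * Real.exp (-(a * ℓ (j : ℕ))))
        = ∑ j : {j : ℕ // T - 1 < ℓ j ∧ ℓ j ≤ T}, ℓ (j : ℕ) * Real.exp (-(a * ℓ (j : ℕ))) :=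
      tsum_fintype _
    have hterm : ∀ j : {j : ℕ // T - 1 < ℓ j ∧ ℓ j ≤ T},
        (T - 1) * Real.exp (-(a * T)) ≤ ℓ (j : ℕ) * Real.exp (-(a * ℓ (j : ℕ))) := by
      intro j
      have h1 : T - 1 ≤ ℓ (j : ℕ) := le_of_lt j.2.1
      have h2 : Real.exp (-(a * T)) ≤ Real.exp (-(a * ℓ (j : ℕ))) := by
        apply Real.exp_le_exp.2
        have := j.2.2
        nlinarith
      exact mul_le_mul h1 h2 (Real.exp_pos _).le (hpos _).le
    have hcard : (Nat.card {j : ℕ // T - 1 < ℓ j ∧ ℓ j ≤ T} : ℝ) = N T - N (T - 1) := by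
      have hdiff : {j : ℕ | T - 1 < ℓ j ∧ ℓ j ≤ T}
          = {j : ℕ | ℓ j ≤ T} \ {j : ℕ | ℓ j ≤ T - 1} := by
        ext j; simp only [Set.mem_setOf_eq, Set.mem_diff, not_le]; tauto
      have hBA : {j : ℕ | ℓ j ≤ T - 1} ⊆ {j : ℕ | ℓ j ≤ T} := by
        intro j hj
        simp only [Set.mem_setOf_eq] at hj ⊢
        linarith
      have h1 : Nat.card {j : ℕ // T - 1 < ℓ j ∧ ℓ j ≤ T}
          = ({j : ℕ | ℓ j ≤ T} \ {j : ℕ | ℓ j ≤ T - 1}).ncard := by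
        rw [← Nat.card_coe_set_eq, ← hdiff]
        rfl
      have h2 : ({j : ℕ | ℓ j ≤ T} \ {j : ℕ | ℓ j ≤ T - 1}).ncard
          = {j : ℕ | ℓ j ≤ T}.ncard - {j : ℕ | ℓ j ≤ T - 1}.ncard :=
        Set.ncard_diff hBA ((hfin T).subset hBA)
      have hle : {j : ℕ | ℓ j ≤ T - 1}.ncard ≤ {j : ℕ | ℓ j ≤ T}.ncard :=
        Set.ncard_le_ncard hBA (hfin T)
      rw [h1, h2, Nat.cast_sub hle, hN, ← Nat.card_coe_set_eq, ← Nat.card_coe_set_eq]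
    have hsumlb : (Nat.card {j : ℕ // T - 1 < ℓ j ∧ ℓ j ≤ T} : ℝ)
        * ((T - 1) * Real.exp (-(a * T)))
        ≤ ∑ j : {j : ℕ // T - 1 < ℓ j ∧ ℓ j ≤ T}, ℓ (j : ℕ) * Real.exp (-(a * ℓ (j : ℕ))) := by
      have hb := Finset.card_nsmul_le_sum Finset.univ
        (fun j : {j : ℕ // T - 1 < ℓ j ∧ ℓ j ≤ T} => ℓ (j : ℕ) * Real.exp (-(a * ℓ (j : ℕ))))
        ((T - 1) * Real.exp (-(a * T))) (fun j _ => hterm j)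
      rw [Nat.card_eq_fintype_card]
      simpa [nsmul_eq_mul, Finset.card_univ] using hb
    rw [hsum]
    have hE : Real.exp (-((h - a) * T)) * Real.exp (-(a * T)) = Real.exp (-h * T) := by
      rw [← Real.exp_add]; congr 1; ring
    calc f T = Real.exp (-((h - a) * T)) *
          ((N T - N (T - 1)) * ((T - 1) * Real.exp (-(a * T)))) := by
          show (T - 1) * Real.exp (-h * T) * (N T - N (T - 1)) = _
          rw [← hE]; ring
      _ ≤ _ := by
          apply mul_le_mul_of_nonneg_left _ (Real.exp_pos _).le
          rw [← hcard]; exact hsumlb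
  -- conclusion
  have hev : ∀ᶠ T : ℝ in atTop, ((c / 2 : ℝ) : EReal) ≤
      ((Real.exp (-((h - a) * T)) *
        ∑' j : {j : ℕ // T - 1 < ℓ j ∧ ℓ j ≤ T}, ℓ (j : ℕ) * Real.exp (-(a * ℓ (j : ℕ))) : ℝ)
        : EReal) := by
    filter_upwards [eventually_ge_atTop (1 : ℝ),
      hflim.eventually (eventually_gt_nhds (show c / 2 < c by linarith))] with T hT1 hTf
    exact_mod_cast le_trans (le_of_lt hTf) (key T hT1)
  have hle : ((c / 2 : ℝ) : EReal) ≤ liminf (fun T : ℝ =>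
      ((Real.exp (-((h - a) * T)) *
        ∑' j : {j : ℕ // T - 1 < ℓ j ∧ ℓ j ≤ T}, ℓ (j : ℕ) * Real.exp (-(a * ℓ (j : ℕ))) : ℝ)
        : EReal)) atTop := le_liminf_of_le (by isBoundedDefault) hev
  refine lt_of_lt_of_le ?_ hle
  exact_mod_cast (by linarith : (0:ℝ) < c / 2)
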